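/- For all real numbers b > 0 and c > 0, one has 2 φ(b·c) ≤ φ(b) + φ(−b) + φ(c) + φ(−c). -/

import Mathlib

open Real

/-- `φ(a) = ((a+1)/(a−1))·log(a²)` for `a ≠ 1`, with `φ(1) = 4` (its limiting value). -/
noncomputable def phi (a : ℝ) : ℝ :=
  if a = 1 then 4 else ((a + 1) / (a - 1)) * Real.log (a ^ 2)

/-- `F x = x * coth x`, with the removable singularity filled in at `0`. -/
noncomputable def FF (x : ℝ) : ℝ :=
  if x = 0 then 1 else x * Real.cosh x / Real.sinh x

lemma L1 {x : ℝ} (hx : 0 ≤ x) : Real.sinh x ≤ x * Real.cosh x := by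
  have mono : MonotoneOn (fun y : ℝ => y * Real.cosh y - Real.sinh y) (Set.Ici 0) := by
    apply monotoneOn_of_deriv_nonneg (convex_Ici 0)
    · exact ((continuous_id.mul Real.continuous_cosh).sub Real.continuous_sinh).continuousOn
    · exact ((differentiable_id.mul Real.differentiable_cosh).sub
        Real.differentiable_sinh).differentiableOn
    · intro y hy
      rw [interior_Ici, Set.mem_Ioi] at hy
      have h1 : HasDerivAt (fun y : ℝ => y * Real.cosh y - Real.sinh y)
          (1 * Real.cosh y + y * Real.sinh y - Real.cosh y) y :=
        ((hasDerivAt_id y).mul (Real.hasDerivAt_cosh y)).sub (Real.hasDerivAt_sinh y)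
      rw [h1.deriv]
      nlinarith [Real.sinh_pos_iff.mpr hy]
  have := mono (Set.self_mem_Ici) (Set.mem_Ici.mpr hx) hx
  simpa using this

/-- `sinh x / x` is nondecreasing: `b * sinh a ≤ a * sinh b` for `0 ≤ a ≤ b`. -/
lemma L2 {a b : ℝ} (ha : 0 ≤ a) (hab : a ≤ b) : b * Real.sinh a ≤ a * Real.sinh b := by
  have mono : MonotoneOn (fun y : ℝ => a * Real.sinh y - y * Real.sinh a) (Set.Ici a) := by
    apply monotoneOn_of_deriv_nonneg (convex_Ici a)
    · exact ((continuous_const.mul Real.continuous_sinh).sub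
        (continuous_id.mul continuous_const)).continuousOn
    · exact (((differentiable_const a).mul Real.differentiable_sinh).sub
        (differentiable_id.mul (differentiable_const _))).differentiableOn
    · intro y hy
      rw [interior_Ici, Set.mem_Ioi] at hy
      have h1 : HasDerivAt (fun y : ℝ => a * Real.sinh y - y * Real.sinh a)
          (a * Real.cosh y - Real.sinh a) y := by
        have := ((hasDerivAt_const y a).mul (Real.hasDerivAt_sinh y)).sub
          ((hasDerivAt_id y).mul (hasDerivAt_const y (Real.sinh a)))
        exact this.congr_deriv (by simp)
      rw [h1.deriv]
      have hcy : Real.cosh a ≤ Real.cosh y := by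
        rw [Real.cosh_le_cosh, abs_of_nonneg ha, abs_of_nonneg (ha.trans hy.le)]
        exact hy.le
      have h2 : Real.sinh a ≤ a * Real.cosh a := L1 ha
      nlinarith [Real.cosh_pos a]
  have := mono (Set.self_mem_Ici) (Set.mem_Ici.mpr hab) hab
  simp only at this
  nlinarith [this]

/-- Key monotonicity: `u cosh u sinh v ≤ v cosh v sinh u` for `0 ≤ u ≤ v`. -/
lemma keyK {u v : ℝ} (hu : 0 ≤ u) (huv : u ≤ v) :
    u * Real.cosh u * Real.sinh v ≤ v * Real.cosh v * Real.sinh u := by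
  have h := L2 (a := v - u) (b := v + u) (by linarith) (by linarith)
  have e1 : Real.sinh (v + u) = Real.sinh v * Real.cosh u + Real.cosh v * Real.sinh u :=
    Real.sinh_add v u
  have e2 : Real.sinh (v - u) = Real.sinh v * Real.cosh u - Real.cosh v * Real.sinh u :=
    Real.sinh_sub v u
  nlinarith [h, e1, e2]

lemma FF_even (x : ℝ) : FF (-x) = FF x := by
  unfold FF
  by_cases hx : x = 0
  · simp [hx]
  · rw [if_neg (by simpa using hx), if_neg hx, Real.cosh_neg, Real.sinh_neg]
    field_simp

lemma FF_one_le (x : ℝ) : 1 ≤ FF x := by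
  have key : ∀ y : ℝ, 0 < y → 1 ≤ FF y := by
    intro y hy
    unfold FF
    rw [if_neg hy.ne']
    rw [le_div_iff₀ (Real.sinh_pos_iff.mpr hy)]
    simpa using L1 hy.le
  rcases lt_trichotomy x 0 with h | h | h
  · rw [← FF_even]; exact key _ (by linarith)
  · simp [FF, h]
  · exact key _ h

/-- Midpoint convexity of `FF` for nonneg `m, d`. -/
lemma FF_mid' {m d : ℝ} (hm : 0 ≤ m) (hd : 0 ≤ d) :
    2 * FF m ≤ FF (m + d) + FF (m - d) := by
  rcases eq_or_lt_of_le hd with hd0 | hd0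
  · simp [← hd0]
    linarith
  rcases eq_or_lt_of_le hm with hm0 | hm0
  · subst hm0
    have h0 : FF 0 = 1 := if_pos rfl
    rw [zero_add, zero_sub, FF_even, h0]
    linarith [FF_one_le d]
  -- now 0 < m, 0 < d
  have hsm : 0 < Real.sinh m := Real.sinh_pos_iff.mpr hm0
  have hsd : 0 < Real.sinh d := Real.sinh_pos_iff.mpr hd0
  have hs1 : 0 < Real.sinh (m + d) := Real.sinh_pos_iff.mpr (by linarith)
  have hFm : FF m = m * Real.cosh m / Real.sinh m := if_neg hm0.ne'
  have hF1 : FF (m + d) = (m + d) * Real.cosh (m + d) / Real.sinh (m + d) :=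
    if_neg (by intro h; linarith)
  rcases lt_trichotomy d m with hdm | hdm | hdm
  · -- generic case d < m
    have hs2 : 0 < Real.sinh (m - d) := Real.sinh_pos_iff.mpr (by linarith)
    have hF2 : FF (m - d) = (m - d) * Real.cosh (m - d) / Real.sinh (m - d) :=
      if_neg (by intro h; linarith)
    rw [hFm, hF1, hF2, div_add_div _ _ hs1.ne' hs2.ne', mul_div_assoc',
      div_le_div_iff₀ hsm (mul_pos hs1 hs2)]
    have hK : d * Real.cosh d * Real.sinh m ≤ m * Real.cosh m * Real.sinh d :=
      keyK hd hdm.le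
    have key : 0 ≤ Real.sinh d *
        (m * Real.cosh m * Real.sinh d - d * Real.cosh d * Real.sinh m) :=
      mul_nonneg hsd.le (sub_nonneg.mpr hK)
    have hid : Real.cosh m ^ 2 - Real.sinh m ^ 2 = 1 := Real.cosh_sq_sub_sinh_sq m
    simp only [Real.sinh_add, Real.sinh_sub, Real.cosh_add, Real.cosh_sub]
    nlinarith [key, hid]
  · -- d = m
    subst hdm
    have h2d : 0 < d + d := by linarith
    have hs2 : 0 < Real.sinh (d + d) := Real.sinh_pos_iff.mpr h2d
    have hF2 : FF (d - d) = 1 := by simp [FF]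
    have hF1' : FF (d + d) = (d + d) * Real.cosh (d + d) / Real.sinh (d + d) :=
      if_neg h2d.ne'
    rw [hFm, hF1', hF2, mul_div_assoc', div_add' _ _ _ hs2.ne',
      div_le_div_iff₀ hsm hs2]
    have hself : d + d ≤ Real.sinh (d + d) := Real.self_le_sinh_iff.mpr h2d.le
    have hid : Real.cosh d ^ 2 - Real.sinh d ^ 2 = 1 := Real.cosh_sq_sub_sinh_sq d
    have key : 0 ≤ Real.sinh d * Real.sinh (d + d) - (d + d) * Real.sinh d := by
      nlinarith [hself, hsd]
    simp only [Real.sinh_add, Real.cosh_add] at key ⊢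
    nlinarith [key, hid, mul_pos hd0 hsd]
  · -- m < d : rewrite FF (m - d) = FF (d - m)
    have hrw : FF (m - d) = FF (d - m) := by rw [← FF_even, neg_sub]
    have hs2 : 0 < Real.sinh (d - m) := Real.sinh_pos_iff.mpr (by linarith)
    have hF2 : FF (d - m) = (d - m) * Real.cosh (d - m) / Real.sinh (d - m) :=
      if_neg (by intro h; linarith)
    rw [hrw, hFm, hF1, hF2, div_add_div _ _ hs1.ne' hs2.ne', mul_div_assoc',
      div_le_div_iff₀ hsm (mul_pos hs1 hs2)]
    have hK : m * Real.cosh m * Real.sinh d ≤ d * Real.cosh d * Real.sinh m :=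
      keyK hm hdm.le
    have key : 0 ≤ Real.sinh d *
        (d * Real.cosh d * Real.sinh m - m * Real.cosh m * Real.sinh d) :=
      mul_nonneg hsd.le (sub_nonneg.mpr hK)
    have hid : Real.cosh m ^ 2 - Real.sinh m ^ 2 = 1 := Real.cosh_sq_sub_sinh_sq m
    simp only [Real.sinh_add, Real.sinh_sub, Real.cosh_add, Real.cosh_sub]
    nlinarith [key, hid]

/-- Midpoint convexity of `FF`. -/
lemma FF_mid (p q : ℝ) : 2 * FF ((p + q) / 2) ≤ FF p + FF q := by
  wlog hpq : q ≤ p generalizing p q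
  · have h := this q p (le_of_not_ge hpq)
    rw [add_comm q p] at h
    linarith
  have hd : 0 ≤ (p - q) / 2 := by linarith
  have hp : p = (p + q) / 2 + (p - q) / 2 := by ring
  have hq : q = (p + q) / 2 - (p - q) / 2 := by ring
  rcases le_or_gt 0 ((p + q) / 2) with hm | hm
  · calc 2 * FF ((p + q) / 2)
        ≤ FF ((p + q) / 2 + (p - q) / 2) + FF ((p + q) / 2 - (p - q) / 2) := FF_mid' hm hd
      _ = FF p + FF q := by
          rw [show (p + q) / 2 + (p - q) / 2 = p by ring,
            show (p + q) / 2 - (p - q) / 2 = q by ring]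
  · have h := FF_mid' (m := -((p + q) / 2)) (d := (p - q) / 2) (by linarith) hd
    have e1 : -((p + q) / 2) + (p - q) / 2 = -q := by ring
    have e2 : -((p + q) / 2) - (p - q) / 2 = -p := by ring
    rw [e1, e2, FF_even ((p + q) / 2), FF_even q, FF_even p] at h
    linarith

lemma exp_inv_sub_ne {s : ℝ} (hs : s ≠ 0) : Real.exp s - (Real.exp s)⁻¹ ≠ 0 := by
  have h : Real.sinh s = (Real.exp s - (Real.exp s)⁻¹) / 2 := by
    rw [Real.sinh_eq, Real.exp_neg]
  intro h0
  have : Real.sinh s = 0 := by rw [h, h0]; norm_num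
  exact (Real.sinh_ne_zero.mpr hs) this

lemma phi_exp (s : ℝ) : phi (Real.exp (2 * s)) = 4 * FF s := by
  by_cases hs : s = 0
  · simp [hs, phi, FF]
  · have hE : Real.exp (2 * s) ≠ 1 := by
      rw [Ne, Real.exp_eq_one_iff]; intro h; exact hs (by linarith)
    have hlog : Real.log (Real.exp (2 * s) ^ 2) = 4 * s := by
      rw [← Real.exp_nat_mul, Real.log_exp]; ring
    rw [phi, if_neg hE, FF, if_neg hs]
    have hsinh : Real.sinh s ≠ 0 := Real.sinh_ne_zero.mpr hs
    rw [hlog, Real.cosh_eq, Real.sinh_eq, Real.exp_neg]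
    have h2s : Real.exp (2 * s) = Real.exp s * Real.exp s := by
      rw [← Real.exp_add]; ring_nf
    have hden : Real.exp (2 * s) - 1 ≠ 0 := sub_ne_zero.mpr hE
    have hden2 : Real.exp s - (Real.exp s)⁻¹ ≠ 0 := exp_inv_sub_ne hs
    rw [h2s] at hden ⊢
    have hEne : Real.exp s ≠ 0 := (Real.exp_pos s).ne'
    field_simp

lemma phi_add_phi_neg (p : ℝ) :
    phi (Real.exp p) + phi (-Real.exp p) = 4 * FF p := by
  have hEpos : (0:ℝ) < Real.exp p := Real.exp_pos p
  have hneg : -Real.exp p ≠ 1 := by nlinarith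
  by_cases hp : p = 0
  · norm_num [hp, phi, FF]
  · have hE1 : Real.exp p ≠ 1 := by rw [Ne, Real.exp_eq_one_iff]; exact hp
    have hlog : Real.log (Real.exp p ^ 2) = 2 * p := by
      rw [← Real.exp_nat_mul, Real.log_exp]; ring
    have hlog2 : Real.log ((-Real.exp p) ^ 2) = 2 * p := by
      rw [neg_pow, ← hlog]; norm_num
    rw [phi, phi, if_neg hE1, if_neg hneg, FF, if_neg hp, hlog, hlog2]
    have hsinh : Real.sinh p ≠ 0 := Real.sinh_ne_zero.mpr hp
    rw [Real.cosh_eq, Real.sinh_eq, Real.exp_neg]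
    have hden : Real.exp p - 1 ≠ 0 := sub_ne_zero.mpr hE1
    have hden3 : Real.exp p + 1 ≠ 0 := by positivity
    have hden4 : -Real.exp p - 1 ≠ 0 := by
      intro h; apply hden3; linarith [h]
    have hden2 : Real.exp p - (Real.exp p)⁻¹ ≠ 0 := exp_inv_sub_ne hp
    have hEne : Real.exp p ≠ 0 := hEpos.ne'
    have hden5 : -1 + Real.exp p ^ 2 ≠ 0 := by
      intro h
      have h2 : (Real.exp p - 1) * (Real.exp p + 1) = 0 := by nlinarith [h]
      rcases mul_eq_zero.mp h2 with h3 | h3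
      · exact hden h3
      · exact hden3 h3
    field_simp
    rw [eq_div_iff (by intro h; apply hden5; linarith)]
    ring

/-- For all real numbers `b > 0` and `c > 0`,
`2 φ(b·c) ≤ φ(b) + φ(−b) + φ(c) + φ(−c)`. -/
theorem two_phi_mul_le (b c : ℝ) (hb : 0 < b) (hc : 0 < c) :
    2 * phi (b * c) ≤ phi b + phi (-b) + phi c + phi (-c) := by
  obtain ⟨p, rfl⟩ : ∃ p, b = Real.exp p := ⟨Real.log b, (Real.exp_log hb).symm⟩
  obtain ⟨q, rfl⟩ : ∃ q, c = Real.exp q := ⟨Real.log c, (Real.exp_log hc).symm⟩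
  have hbc : Real.exp p * Real.exp q = Real.exp (2 * ((p + q) / 2)) := by
    rw [← Real.exp_add]; ring_nf
  rw [hbc, phi_exp]
  linarith [phi_add_phi_neg p, phi_add_phi_neg q, FF_mid p q]
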